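/- (Willems' fundamental lemma) Let (A, B, C, D) be a discrete-time LTI system with state dimension n and controllable pair (A, B). Let (u^d, y^d) be a length-T input/output trajectory of the system, and suppose the input sequence u^d is persistently exciting of order L + n. Then a pair (u^s, y^s) with u^s ∈ (R^m)^L, y^s ∈ (R^p)^L is a length-L input/output trajectory of the system if and only if there exists g ∈ R^{T−L+1} such that H_L(u^d) g = u^s and H_L(y^d) g = y^s (identifying (R^q)^L with R^{qL} by stacking). -/

import Mathlib

open Matrix

noncomputable section

/-- `(u, y)` is a length-`L` input/output trajectory of the discrete-time LTI system
`(A, B, C, D)`: there is a state sequence `x` with `x(k+1) = A x(k) + B u(k)` and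
`y(k) = C x(k) + D u(k)` for `k = 0, …, L-1`. -/
def IsTrajectory {n m p : ℕ} (A : Matrix (Fin n) (Fin n) ℝ) (B : Matrix (Fin n) (Fin m) ℝ)
    (C : Matrix (Fin p) (Fin n) ℝ) (D : Matrix (Fin p) (Fin m) ℝ) {L : ℕ}
    (u : Fin L → Fin m → ℝ) (y : Fin L → Fin p → ℝ) : Prop :=
  ∃ x : Fin (L + 1) → Fin n → ℝ, ∀ k : Fin L,
    x k.succ = A.mulVec (x k.castSucc) + B.mulVec (u k) ∧
    y k = C.mulVec (x k.castSucc) + D.mulVec (u k)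

/-- The block Hankel matrix `H_l(ω) ∈ ℝ^{ql × (T-l+1)}` of depth `l` of a length-`T`
sequence `ω` with values in `ℝ^q`; rows are indexed by `Fin l × Fin q`, and the
`(i, j)` block entry is `ω (i + j)` (0-indexed). -/
def hankel {q T : ℕ} (l : ℕ) (hl : l ≤ T) (ω : Fin T → Fin q → ℝ) :
    Matrix (Fin l × Fin q) (Fin (T - l + 1)) ℝ :=
  Matrix.of fun iq j =>
    ω ⟨(iq.1 : ℕ) + (j : ℕ), by have := iq.1.isLt; have := j.isLt; omega⟩ iq.2

/-- The controllability matrix `[B, AB, …, A^{n-1}B]`. -/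
def ctrbMat {n : ℕ} {q : Type*} [Fintype q] (A : Matrix (Fin n) (Fin n) ℝ)
    (B : Matrix (Fin n) q ℝ) : Matrix (Fin n) (Fin n × q) ℝ :=
  Matrix.of fun r kj => (A ^ (kj.1 : ℕ) * B) r kj.2

/-- The order-`l` observability matrix `col(C, CA, …, CA^{l-1})`. -/
def obsvMat {n p : ℕ} (l : ℕ) (A : Matrix (Fin n) (Fin n) ℝ)
    (C : Matrix (Fin p) (Fin n) ℝ) : Matrix (Fin l × Fin p) (Fin n) ℝ :=
  Matrix.of fun kr c => (C * A ^ (kr.1 : ℕ)) kr.2 c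

/-- Concatenation of a length-`Ti` sequence followed by a length-`N` sequence. -/
def catSeq {α : Type*} {Ti N : ℕ} (a : Fin Ti → α) (b : Fin N → α) : Fin (Ti + N) → α :=
  fun k => if h : (k : ℕ) < Ti then a ⟨k, h⟩ else b ⟨(k : ℕ) - Ti, by have := k.isLt; omega⟩

end


namespace WillemsAux


lemma mulVec_surjective_of_rank {R' C' : Type*} [Fintype R'] [Fintype C']
    (M : Matrix R' C' ℝ) (h : M.rank = Fintype.card R') :
    Function.Surjective M.mulVec := by
  have h2 : LinearMap.range M.mulVecLin = ⊤ := by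
    apply Submodule.eq_top_of_finrank_eq
    rw [Module.finrank_fintype_fun_eq_card]
    exact h
  intro y
  obtain ⟨x, hx⟩ := LinearMap.range_eq_top.mp h2 y
  exact ⟨x, hx⟩

lemma vecMul_eq_zero_of_surj {R' C' : Type*} [Fintype R'] [Fintype C']
    (M : Matrix R' C' ℝ) (hs : Function.Surjective M.mulVec)
    (v : R' → ℝ) (hv : Matrix.vecMul v M = 0) : v = 0 := by
  obtain ⟨g, hg⟩ := hs v
  have : v ⬝ᵥ v = 0 := by
    calc v ⬝ᵥ v = v ⬝ᵥ (M.mulVec g) := by rw [hg]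
    _ = Matrix.vecMul v M ⬝ᵥ g := Matrix.dotProduct_mulVec v M g
    _ = 0 := by rw [hv, zero_dotProduct]
  ext i
  have := dotProduct_self_eq_zero.mp this
  exact congrFun this i

lemma rank_eq_card_rows_of_leftker {R' C' : Type*} [Fintype R'] [Fintype C'] [DecidableEq R']
    (M : Matrix R' C' ℝ) (h : ∀ v : R' → ℝ, Matrix.vecMul v M = 0 → v = 0) :
    M.rank = Fintype.card R' := by
  have hinj : Function.Injective Mᵀ.mulVecLin := by
    rw [← LinearMap.ker_eq_bot]
    apply LinearMap.ker_eq_bot'.mpr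
    intro v hv
    apply h
    rw [← Matrix.mulVec_transpose]
    exact hv
  have : Mᵀ.rank = Fintype.card R' := by
    rw [Matrix.rank, LinearMap.finrank_range_of_inj hinj,
      Module.finrank_fintype_fun_eq_card]
  rw [← Matrix.rank_transpose]
  exact this



variable {n m p : ℕ} (A : Matrix (Fin n) (Fin n) ℝ) (B : Matrix (Fin n) (Fin m) ℝ)
  (C : Matrix (Fin p) (Fin n) ℝ) (D : Matrix (Fin p) (Fin m) ℝ)

lemma state_formula (x : ℕ → Fin n → ℝ) (u : ℕ → Fin m → ℝ) (N : ℕ)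
    (hx : ∀ j < N, x (j + 1) = A.mulVec (x j) + B.mulVec (u j)) :
    ∀ k j, j + k ≤ N → x (j + k) = (A ^ k).mulVec (x j)
      + ∑ s ∈ Finset.range k, ((A ^ (k - 1 - s)) * B).mulVec (u (j + s)) := by
  intro k
  induction k with
  | zero =>
    intro j _
    simp [Matrix.one_mulVec]
  | succ k ih =>
    intro j hj
    have h1 : j + k < N := by omega
    have : x (j + (k + 1)) = A.mulVec (x (j + k)) + B.mulVec (u (j + k)) := by
      have := hx (j + k) h1
      rw [← this]; ring_nf
    rw [this, ih j (by omega)]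
    rw [Matrix.mulVec_add]
    rw [Finset.sum_range_succ]
    have hA : A.mulVec ((A ^ k).mulVec (x j)) = (A ^ (k + 1)).mulVec (x j) := by
      rw [Matrix.mulVec_mulVec, ← pow_succ']
    have hS : A.mulVec (∑ s ∈ Finset.range k, ((A ^ (k - 1 - s)) * B).mulVec (u (j + s)))
        = ∑ s ∈ Finset.range k, ((A ^ (k - s)) * B).mulVec (u (j + s)) := by
      rw [← Matrix.mulVecLin_apply, map_sum]
      apply Finset.sum_congr rfl
      intro s hs
      have hsk : s < k := Finset.mem_range.mp hs
      have hp : A * A ^ (k - 1 - s) = A ^ (k - s) := by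
        rw [← pow_succ']
        congr 1
        omega
      rw [Matrix.mulVecLin_apply, Matrix.mulVec_mulVec, ← Matrix.mul_assoc, hp]
    rw [hA, hS]
    have : ((A ^ (k + 1 - 1 - k)) * B).mulVec (u (j + k)) = B.mulVec (u (j + k)) := by
      simp
    rw [this]
    have hkk : k + 1 - 1 = k := rfl
    simp only [hkk]
    abel

lemma output_formula (x : ℕ → Fin n → ℝ) (u : ℕ → Fin m → ℝ) (y : ℕ → Fin p → ℝ) (N : ℕ)
    (hx : ∀ j < N, x (j + 1) = A.mulVec (x j) + B.mulVec (u j))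
    (hy : ∀ j < N, y j = C.mulVec (x j) + D.mulVec (u j)) :
    ∀ k, k < N → y k = (C * A ^ k).mulVec (x 0)
      + ∑ s ∈ Finset.range k, ((C * (A ^ (k - 1 - s)) * B).mulVec (u s))
      + D.mulVec (u k) := by
  intro k hk
  have h0 : y k = C.mulVec (x k) + D.mulVec (u k) := hy k hk
  have h1 := state_formula A B x u N hx k 0 (by omega)
  simp only [Nat.zero_add] at h1
  rw [h0, h1, Matrix.mulVec_add]
  congr 2
  · rw [Matrix.mulVec_mulVec]
  · rw [← Matrix.mulVecLin_apply, map_sum]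
    apply Finset.sum_congr rfl
    intro s hs
    rw [Matrix.mulVecLin_apply, Matrix.mulVec_mulVec, Matrix.mul_assoc]

/-- Cayley–Hamilton in the form we need. -/
lemma cayley (A : Matrix (Fin n) (Fin n) ℝ) :
    A ^ n + ∑ i ∈ Finset.range n, (A.charpoly.coeff i) • A ^ i = 0 := by
  have h := Matrix.aeval_self_charpoly A
  have hdeg : A.charpoly.natDegree = n := by
    rw [Matrix.charpoly_natDegree_eq_dim, Fintype.card_fin]
  have := Polynomial.aeval_eq_sum_range' (n := n + 1) (p := A.charpoly)
    (by omega) A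
  rw [this] at h
  rw [Finset.sum_range_succ] at h
  have hlead : A.charpoly.coeff n = 1 := by
    have h2 := A.charpoly_monic.coeff_natDegree
    rwa [hdeg] at h2
  rw [hlead, one_smul] at h
  rw [add_comm] at h
  exact h



lemma sum_dotProduct'' {α ι : Type*} [Fintype α] (s : Finset ι)
    (f : ι → α → ℝ) (v : α → ℝ) : (∑ i ∈ s, f i) ⬝ᵥ v = ∑ i ∈ s, f i ⬝ᵥ v := by
  simp only [dotProduct, Finset.sum_apply, Finset.sum_mul]
  exact Finset.sum_comm

lemma sum_mulVec'' {α β ι : Type*} [Fintype α] (s : Finset ι)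
    (M : ι → Matrix β α ℝ) (v : α → ℝ) :
    (∑ i ∈ s, M i) *ᵥ v = ∑ i ∈ s, (M i *ᵥ v) := by
  ext r
  simp only [Matrix.mulVec, dotProduct, Finset.sum_apply, Matrix.sum_apply,
    Finset.sum_mul]
  exact Finset.sum_comm

lemma dotProduct_sum'' {α ι : Type*} [Fintype α] (v : α → ℝ) (s : Finset ι)
    (f : ι → α → ℝ) : v ⬝ᵥ (∑ i ∈ s, f i) = ∑ i ∈ s, v ⬝ᵥ f i := by
  simp only [dotProduct, Finset.sum_apply, Finset.mul_sum]
  exact Finset.sum_comm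







lemma left_kernel (n m T L : ℕ) (hLnT : L + n ≤ T)
    (A : Matrix (Fin n) (Fin n) ℝ) (B : Matrix (Fin n) (Fin m) ℝ)
    (hctrbS : Function.Surjective (ctrbMat A B).mulVec)
    (Ud : ℕ → Fin m → ℝ) (Xd : ℕ → Fin n → ℝ)
    (hstep : ∀ j < T, Xd (j + 1) = A.mulVec (Xd j) + B.mulVec (Ud j))
    (hPEker : ∀ w : ℕ → Fin m → ℝ, (∀ t, L + n ≤ t → w t = 0) →
       (∀ j : ℕ, j + (L + n) ≤ T → ∑ t ∈ Finset.range (L + n), w t ⬝ᵥ Ud (t + j) = 0) →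
       ∀ t, w t = 0)
    (Ξ : ℕ → Fin m → ℝ) (hΞsupp : ∀ k, L ≤ k → Ξ k = 0) (η : Fin n → ℝ)
    (hker : ∀ j : ℕ, j + L ≤ T →
       (∑ k ∈ Finset.range L, Ξ k ⬝ᵥ Ud (k + j)) + η ⬝ᵥ Xd j = 0) :
    (∀ k, Ξ k = 0) ∧ η = 0 := by
  classical
  -- auxiliary vectors
  set Hη : ℕ → Fin m → ℝ := fun d => Matrix.vecMul η ((A ^ d) * B) with hHη
  set W : ℕ → ℕ → Fin m → ℝ := fun i t => if t < i then Hη (i - 1 - t) else Ξ (t - i) with hW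
  -- key identity
  have KI : ∀ i, i ≤ n → ∀ j, j + (L + n) ≤ T →
      ∑ t ∈ Finset.range (L + n), W i t ⬝ᵥ Ud (t + j)
        = -(Matrix.vecMul η (A ^ i) ⬝ᵥ Xd j) := by
    intro i hi j hj
    have hsplit : ∑ t ∈ Finset.range (L + n), W i t ⬝ᵥ Ud (t + j)
        = (∑ t ∈ Finset.range i, W i t ⬝ᵥ Ud (t + j))
          + ∑ t ∈ Finset.Ico i (L + n), W i t ⬝ᵥ Ud (t + j) := by
      rw [Finset.range_eq_Ico, ← Finset.sum_Ico_consecutive _ (Nat.zero_le i) (by omega),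
        ← Finset.range_eq_Ico]
    have hfirst : ∀ t ∈ Finset.range i, W i t ⬝ᵥ Ud (t + j)
        = Matrix.vecMul η ((A ^ (i - 1 - t)) * B) ⬝ᵥ Ud (j + t) := by
      intro t ht
      have ht' : t < i := Finset.mem_range.mp ht
      simp only [hW, if_pos ht', hHη, Nat.add_comm t j]
    have hsecond : ∑ t ∈ Finset.Ico i (L + n), W i t ⬝ᵥ Ud (t + j)
        = ∑ k ∈ Finset.range L, Ξ k ⬝ᵥ Ud (k + (j + i)) := by
      rw [Finset.sum_Ico_eq_sum_range]
      have h1 : ∀ k ∈ Finset.range (L + n - i), W i (i + k) ⬝ᵥ Ud (i + k + j)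
          = Ξ k ⬝ᵥ Ud (k + (j + i)) := by
        intro k hk
        have : ¬ (i + k < i) := by omega
        simp only [hW, if_neg this]
        have h2 : i + k - i = k := by omega
        have h3 : i + k + j = k + (j + i) := by omega
        rw [h2, h3]
      rw [Finset.sum_congr rfl h1]
      have hLle : L ≤ L + n - i := by omega
      rw [show L + n - i = L + (L + n - i - L) by omega]
      rw [Finset.sum_range_add]
      have hz : ∀ k ∈ Finset.range (L + n - i - L), Ξ (L + k) ⬝ᵥ Ud (L + k + (j + i)) = 0 := by
        intro k _
        rw [hΞsupp (L + k) (by omega), zero_dotProduct]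
      rw [Finset.sum_congr rfl hz, Finset.sum_const_zero, add_zero]
    have hker' : (∑ k ∈ Finset.range L, Ξ k ⬝ᵥ Ud (k + (j + i))) = -(η ⬝ᵥ Xd (j + i)) := by
      have := hker (j + i) (by omega)
      linarith
    have hstate : η ⬝ᵥ Xd (j + i) = Matrix.vecMul η (A ^ i) ⬝ᵥ Xd j
        + ∑ s ∈ Finset.range i, Matrix.vecMul η ((A ^ (i - 1 - s)) * B) ⬝ᵥ Ud (j + s) := by
      rw [state_formula A B Xd Ud T hstep i j (by omega)]
      rw [dotProduct_add, Matrix.dotProduct_mulVec]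
      congr 1
      rw [dotProduct_sum'']
      exact Finset.sum_congr rfl fun s _ => Matrix.dotProduct_mulVec _ _ _
    rw [hsplit, Finset.sum_congr rfl hfirst, hsecond, hker', hstate]
    ring_nf
  -- the Cayley–Hamilton combination
  set c : ℕ → ℝ := fun i => A.charpoly.coeff i with hc
  set Wtot : ℕ → Fin m → ℝ := fun t => W n t + ∑ i ∈ Finset.range n, c i • W i t with hWtotdef
  have hWsupp : ∀ i, i ≤ n → ∀ t, L + n ≤ t → W i t = 0 := by
    intro i hi t ht
    have h1 : ¬ t < i := by omega
    simp only [hW, if_neg h1]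
    exact hΞsupp (t - i) (by omega)
  have hsupp : ∀ t, L + n ≤ t → Wtot t = 0 := by
    intro t ht
    simp only [hWtotdef]
    rw [hWsupp n le_rfl t ht]
    have : ∀ i ∈ Finset.range n, c i • W i t = 0 := by
      intro i hi
      rw [hWsupp i (le_of_lt (Finset.mem_range.mp hi)) t ht, smul_zero]
    rw [Finset.sum_congr rfl this, Finset.sum_const_zero, add_zero]
  have hsum : ∀ j : ℕ, j + (L + n) ≤ T →
      ∑ t ∈ Finset.range (L + n), Wtot t ⬝ᵥ Ud (t + j) = 0 := by
    intro j hj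
    have hterm : ∀ t ∈ Finset.range (L + n), Wtot t ⬝ᵥ Ud (t + j)
        = W n t ⬝ᵥ Ud (t + j) + ∑ i ∈ Finset.range n, c i * (W i t ⬝ᵥ Ud (t + j)) := by
      intro t _
      simp only [hWtotdef]
      rw [add_dotProduct, sum_dotProduct'']
      congr 1
      refine Finset.sum_congr rfl fun i _ => ?_
      rw [smul_dotProduct, smul_eq_mul]
    rw [Finset.sum_congr rfl hterm, Finset.sum_add_distrib]
    rw [KI n le_rfl j hj]
    rw [Finset.sum_comm]
    have hinner : ∀ i ∈ Finset.range n,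
        ∑ t ∈ Finset.range (L + n), c i * (W i t ⬝ᵥ Ud (t + j))
          = c i * -(Matrix.vecMul η (A ^ i) ⬝ᵥ Xd j) := by
      intro i hi
      rw [← Finset.mul_sum, KI i (le_of_lt (Finset.mem_range.mp hi)) j hj]
    rw [Finset.sum_congr rfl hinner]
    have key : (A ^ n) *ᵥ Xd j + ∑ i ∈ Finset.range n, c i • ((A ^ i) *ᵥ Xd j) = 0 := by
      have h0 := cayley A
      have h1 : (A ^ n) *ᵥ Xd j + ∑ i ∈ Finset.range n, c i • ((A ^ i) *ᵥ Xd j)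
          = (A ^ n + ∑ i ∈ Finset.range n, c i • A ^ i) *ᵥ Xd j := by
        rw [Matrix.add_mulVec, sum_mulVec'']
        congr 1
        refine Finset.sum_congr rfl fun i _ => ?_
        rw [Matrix.smul_mulVec]
      rw [h1, h0, Matrix.zero_mulVec]
    have keyd : η ⬝ᵥ ((A ^ n) *ᵥ Xd j)
        + ∑ i ∈ Finset.range n, c i * (η ⬝ᵥ ((A ^ i) *ᵥ Xd j)) = 0 := by
      have := congrArg (fun v => η ⬝ᵥ v) key
      simpa [dotProduct_add, dotProduct_sum'', dotProduct_smul,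
        smul_eq_mul] using this
    simp only [Matrix.dotProduct_mulVec] at keyd
    simp only [mul_neg]
    rw [Finset.sum_neg_distrib]
    linarith
  have hWtot0 : ∀ t, Wtot t = 0 := hPEker Wtot hsupp hsum
  -- extraction of Ξ
  have hXi : ∀ d k, k < L → L - 1 - k = d → Ξ k = 0 := by
    intro d
    induction d using Nat.strong_induction_on with
    | _ d IH =>
      intro k hk hd
      have h0 := hWtot0 (n + k)
      simp only [hWtotdef] at h0
      have hWn : W n (n + k) = Ξ k := by
        have h1 : ¬ n + k < n := by omega
        have h2 : n + k - n = k := by omega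
        simp only [hW, if_neg h1, h2]
      have hWi : ∀ i ∈ Finset.range n, c i • W i (n + k) = 0 := by
        intro i hi
        have hin : i < n := Finset.mem_range.mp hi
        have h1 : ¬ n + k < i := by omega
        simp only [hW, if_neg h1]
        by_cases h2 : L ≤ n + k - i
        · rw [hΞsupp _ h2, smul_zero]
        · have h3 : n + k - i < L := by omega
          have h4 : L - 1 - (n + k - i) < d := by omega
          rw [IH _ h4 (n + k - i) h3 rfl, smul_zero]
      rw [hWn, Finset.sum_congr rfl hWi, Finset.sum_const_zero, add_zero] at h0
      exact h0
  have hΞall : ∀ k, Ξ k = 0 := by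
    intro k
    by_cases h : k < L
    · exact hXi (L - 1 - k) k h rfl
    · exact hΞsupp k (by omega)
  -- extraction of η
  have hHd : ∀ d, d < n → Hη d = 0 := by
    intro d
    induction d using Nat.strong_induction_on with
    | _ d IH =>
      intro hdn
      have h0 := hWtot0 (n - 1 - d)
      simp only [hWtotdef] at h0
      have hWn : W n (n - 1 - d) = Hη d := by
        have h1 : n - 1 - d < n := by omega
        have h2 : n - 1 - (n - 1 - d) = d := by omega
        simp only [hW, if_pos h1, h2]
      have hWi : ∀ i ∈ Finset.range n, c i • W i (n - 1 - d) = 0 := by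
        intro i hi
        have hin : i < n := Finset.mem_range.mp hi
        by_cases h1 : n - 1 - d < i
        · simp only [hW, if_pos h1]
          have h2 : i - 1 - (n - 1 - d) < d := by omega
          rw [IH _ h2 (by omega), smul_zero]
        · simp only [hW, if_neg h1]
          rw [hΞall, smul_zero]
      rw [hWn, Finset.sum_congr rfl hWi, Finset.sum_const_zero, add_zero] at h0
      exact h0
  have hη : η = 0 := by
    apply vecMul_eq_zero_of_surj _ hctrbS
    funext kr
    have hk : (kr.1 : ℕ) < n := kr.1.isLt
    have h6 := congrFun (hHd kr.1 hk) kr.2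
    simp only [hHη] at h6
    have h5 : Matrix.vecMul η (ctrbMat A B) kr
        = Matrix.vecMul η ((A ^ (kr.1 : ℕ)) * B) kr.2 := by
      simp only [Matrix.vecMul, dotProduct, ctrbMat, Matrix.of_apply]
    rw [h5, h6]
    rfl
  exact ⟨hΞall, hη⟩


lemma mulVec_sum3 {α β ι : Type*} [Fintype α] (s : Finset ι) (M : Matrix β α ℝ)
    (v : ι → α → ℝ) : M *ᵥ (∑ i ∈ s, v i) = ∑ i ∈ s, M *ᵥ v i := by
  ext r
  simp only [Matrix.mulVec, dotProduct, Finset.sum_apply, Finset.mul_sum]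
  exact Finset.sum_comm

end WillemsAux

/-- **Willems' fundamental lemma.** Let `(A,B,C,D)` be a discrete-time
LTI system with controllable pair `(A,B)`, let `(u^d, y^d)` be a length-`T` trajectory
whose input is persistently exciting of order `L + n` (its depth-`(L+n)` Hankel matrix
has full row rank `m(L+n)`).  Then `(u^s, y^s)` is a length-`L` trajectory of the
system iff there exists `g ∈ ℝ^{T-L+1}` with `H_L(u^d) g = u^s` and `H_L(y^d) g = y^s`. -/
theorem willems_fundamental_lemma
    (n m p T L : ℕ) (hLT : L ≤ T) (hLnT : L + n ≤ T)
    (A : Matrix (Fin n) (Fin n) ℝ) (B : Matrix (Fin n) (Fin m) ℝ)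
    (C : Matrix (Fin p) (Fin n) ℝ) (D : Matrix (Fin p) (Fin m) ℝ)
    (hctrb : (ctrbMat A B).rank = n)
    (ud : Fin T → Fin m → ℝ) (yd : Fin T → Fin p → ℝ)
    (htraj : IsTrajectory A B C D ud yd)
    (hPE : (hankel (L + n) hLnT ud).rank = m * (L + n))
    (us : Fin L → Fin m → ℝ) (ys : Fin L → Fin p → ℝ) :
    IsTrajectory A B C D us ys ↔
      ∃ g : Fin (T - L + 1) → ℝ,
        (hankel L hLT ud).mulVec g = (fun ki => us ki.1 ki.2) ∧
        (hankel L hLT yd).mulVec g = (fun ki => ys ki.1 ki.2) := by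
  classical
  obtain ⟨xd, hxd⟩ := htraj
  set Ud : ℕ → Fin m → ℝ := fun j => if h : j < T then ud ⟨j, h⟩ else 0 with hUdD
  set Yd : ℕ → Fin p → ℝ := fun j => if h : j < T then yd ⟨j, h⟩ else 0 with hYdD
  set Xd : ℕ → Fin n → ℝ := fun j => if h : j < T + 1 then xd ⟨j, h⟩ else 0 with hXdD
  have hUdeq : ∀ j (h : j < T), Ud j = ud ⟨j, h⟩ := fun j h => dif_pos h
  have hYdeq : ∀ j (h : j < T), Yd j = yd ⟨j, h⟩ := fun j h => dif_pos h
  have hstepX : ∀ j < T, Xd (j + 1) = A.mulVec (Xd j) + B.mulVec (Ud j) := by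
    intro j hj
    have h1 := (hxd ⟨j, hj⟩).1
    simp only [hXdD, hUdD]
    rw [dif_pos (by omega : j + 1 < T + 1), dif_pos (by omega : j < T + 1), dif_pos hj]
    exact h1
  have hstepY : ∀ j < T, Yd j = C.mulVec (Xd j) + D.mulVec (Ud j) := by
    intro j hj
    have h1 := (hxd ⟨j, hj⟩).2
    simp only [hXdD, hUdD, hYdD]
    rw [dif_pos hj, dif_pos (by omega : j < T + 1), dif_pos hj]
    exact h1
  -- combination of windows is a trajectory
  have combX : ∀ (g : Fin (T - L + 1) → ℝ) (k : ℕ), k < L →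
      (∑ j : Fin (T - L + 1), g j • Xd ((k + 1) + (j : ℕ)))
        = A.mulVec (∑ j : Fin (T - L + 1), g j • Xd (k + (j : ℕ)))
          + B.mulVec (∑ j : Fin (T - L + 1), g j • Ud (k + (j : ℕ))) := by
    intro g k hk
    rw [WillemsAux.mulVec_sum3, WillemsAux.mulVec_sum3, ← Finset.sum_add_distrib]
    refine Finset.sum_congr rfl fun j _ => ?_
    rw [Matrix.mulVec_smul, Matrix.mulVec_smul, ← smul_add]
    congr 1
    have hj : (j : ℕ) < T - L + 1 := j.isLt
    rw [show (k + 1) + (j : ℕ) = (k + (j : ℕ)) + 1 by omega]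
    exact hstepX (k + (j : ℕ)) (by omega)
  have combY : ∀ (g : Fin (T - L + 1) → ℝ) (k : ℕ), k < L →
      (∑ j : Fin (T - L + 1), g j • Yd (k + (j : ℕ)))
        = C.mulVec (∑ j : Fin (T - L + 1), g j • Xd (k + (j : ℕ)))
          + D.mulVec (∑ j : Fin (T - L + 1), g j • Ud (k + (j : ℕ))) := by
    intro g k hk
    rw [WillemsAux.mulVec_sum3, WillemsAux.mulVec_sum3, ← Finset.sum_add_distrib]
    refine Finset.sum_congr rfl fun j _ => ?_
    rw [Matrix.mulVec_smul, Matrix.mulVec_smul, ← smul_add]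
    congr 1
    have hj : (j : ℕ) < T - L + 1 := j.isLt
    exact hstepY (k + (j : ℕ)) (by omega)
  -- evaluating a Hankel matrix-vector product
  have hank_apply : ∀ {q : ℕ} (ω : Fin T → Fin q → ℝ) (Ω : ℕ → Fin q → ℝ),
      (∀ j (h : j < T), Ω j = ω ⟨j, h⟩) → ∀ (g : Fin (T - L + 1) → ℝ) (k : ℕ)
      (hk : k < L) (i : Fin q),
      ((hankel L hLT ω).mulVec g) (⟨k, hk⟩, i)
        = (∑ j : Fin (T - L + 1), g j • Ω (k + (j : ℕ))) i := by
    intro q ω Ω hΩ g k hk i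
    simp only [Matrix.mulVec, dotProduct, hankel, Matrix.of_apply,
      Finset.sum_apply, Pi.smul_apply, smul_eq_mul]
    refine Finset.sum_congr rfl fun j _ => ?_
    have hj : (j : ℕ) < T - L + 1 := j.isLt
    rw [hΩ (k + (j : ℕ)) (by omega), mul_comm]
  constructor
  · -- hard direction
    rintro ⟨xs, hxs⟩
    set Us : ℕ → Fin m → ℝ := fun k => if h : k < L then us ⟨k, h⟩ else 0 with hUsD
    set Ys : ℕ → Fin p → ℝ := fun k => if h : k < L then ys ⟨k, h⟩ else 0 with hYsD
    set Xs : ℕ → Fin n → ℝ := fun k => if h : k < L + 1 then xs ⟨k, h⟩ else 0 with hXsD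
    have hstepXs : ∀ j < L, Xs (j + 1) = A.mulVec (Xs j) + B.mulVec (Us j) := by
      intro j hj
      have h1 := (hxs ⟨j, hj⟩).1
      simp only [hXsD, hUsD]
      rw [dif_pos (by omega : j + 1 < L + 1), dif_pos (by omega : j < L + 1), dif_pos hj]
      exact h1
    have hstepYs : ∀ j < L, Ys j = C.mulVec (Xs j) + D.mulVec (Us j) := by
      intro j hj
      have h1 := (hxs ⟨j, hj⟩).2
      simp only [hXsD, hUsD, hYsD]
      rw [dif_pos hj, dif_pos (by omega : j < L + 1), dif_pos hj]
      exact h1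
    -- the stacked matrix
    set M : Matrix ((Fin L × Fin m) ⊕ (Fin n)) (Fin (T - L + 1)) ℝ :=
      Matrix.of (Sum.elim (fun ki j => hankel L hLT ud ki j)
        (fun r j => Xd (j : ℕ) r)) with hMD
    -- PE kernel property
    have hPEsurj : Function.Surjective (hankel (L + n) hLnT ud).mulVec := by
      apply WillemsAux.mulVec_surjective_of_rank
      rw [hPE, Fintype.card_prod, Fintype.card_fin, Fintype.card_fin, Nat.mul_comm]
    have hPEker : ∀ w : ℕ → Fin m → ℝ, (∀ t, L + n ≤ t → w t = 0) →
        (∀ j : ℕ, j + (L + n) ≤ T →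
          ∑ t ∈ Finset.range (L + n), w t ⬝ᵥ Ud (t + j) = 0) →
        ∀ t, w t = 0 := by
      intro w hsupp hsum t
      set wflat : Fin (L + n) × Fin m → ℝ := fun tr => w tr.1 tr.2 with hwD
      have h0 : Matrix.vecMul wflat (hankel (L + n) hLnT ud) = 0 := by
        funext j
        have hj : (j : ℕ) + (L + n) ≤ T := by have := j.isLt; omega
        have h1 := hsum (j : ℕ) hj
        simp only [Pi.zero_apply]
        rw [← h1]
        show ∑ tr : Fin (L + n) × Fin m, wflat tr * hankel (L + n) hLnT ud tr j = _
        rw [Fintype.sum_prod_type,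
          ← Fin.sum_univ_eq_sum_range (fun t => w t ⬝ᵥ Ud (t + (j : ℕ))) (L + n)]
        refine Finset.sum_congr rfl fun t _ => ?_
        show _ = ∑ r : Fin m, w (t : ℕ) r * Ud ((t : ℕ) + (j : ℕ)) r
        refine Finset.sum_congr rfl fun r _ => ?_
        rw [hUdeq ((t : ℕ) + (j : ℕ)) (by have := t.isLt; omega)]
        rfl
      have h2 := WillemsAux.vecMul_eq_zero_of_surj _ hPEsurj wflat h0
      by_cases ht : t < L + n
      · funext r
        exact congrFun h2 (⟨t, ht⟩, r)
      · exact hsupp t (by omega)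
    -- full row rank of the stacked matrix
    have hMker : ∀ v : ((Fin L × Fin m) ⊕ (Fin n)) → ℝ, Matrix.vecMul v M = 0 → v = 0 := by
      intro v hv
      set Ξ : ℕ → Fin m → ℝ :=
        fun k => if h : k < L then (fun r => v (Sum.inl (⟨k, h⟩, r))) else 0 with hXiD
      set η : Fin n → ℝ := fun r => v (Sum.inr r) with hetaD
      have hΞsupp : ∀ k, L ≤ k → Ξ k = 0 := by
        intro k hk
        simp only [hXiD]
        rw [dif_neg (by omega)]
      have hker : ∀ j : ℕ, j + L ≤ T →
          (∑ k ∈ Finset.range L, Ξ k ⬝ᵥ Ud (k + j)) + η ⬝ᵥ Xd j = 0 := by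
        intro j hj
        have hjlt : j < T - L + 1 := by omega
        have h1 := congrFun hv ⟨j, hjlt⟩
        simp only [Pi.zero_apply] at h1
        rw [← h1]
        show _ = ∑ idx : (Fin L × Fin m) ⊕ (Fin n), v idx * M idx ⟨j, hjlt⟩
        rw [Fintype.sum_sum_type, Fintype.sum_prod_type]
        congr 1
        · rw [← Fin.sum_univ_eq_sum_range (fun k => Ξ k ⬝ᵥ Ud (k + j)) L]
          refine Finset.sum_congr rfl fun k _ => ?_
          show ∑ r : Fin m, Ξ (k : ℕ) r * Ud ((k : ℕ) + j) r = _
          simp only [hXiD, dif_pos k.isLt, Fin.eta]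
          refine Finset.sum_congr rfl fun r _ => ?_
          rw [hUdeq ((k : ℕ) + j) (by have := k.isLt; omega)]
          rfl
      have hres := WillemsAux.left_kernel n m T L hLnT A B
        (WillemsAux.mulVec_surjective_of_rank _ (by rw [hctrb, Fintype.card_fin]))
        Ud Xd hstepX hPEker Ξ hΞsupp η hker
      funext idx
      cases idx with
      | inl ki =>
        have h3 := congrFun (hres.1 (ki.1 : ℕ)) ki.2
        simp only [hXiD, dif_pos ki.1.isLt, Fin.eta, Pi.zero_apply] at h3
        simpa using h3
      | inr r => exact congrFun hres.2 r
    have hMsurj : Function.Surjective M.mulVec :=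
      WillemsAux.mulVec_surjective_of_rank M
        (WillemsAux.rank_eq_card_rows_of_leftker M hMker)
    obtain ⟨g, hMg⟩ := hMsurj (Sum.elim (fun ki => us ki.1 ki.2) (fun r => Xs 0 r))
    have hg1 : (hankel L hLT ud).mulVec g = fun ki => us ki.1 ki.2 := by
      funext ki
      exact congrFun hMg (Sum.inl ki)
    have hZ0 : (∑ j : Fin (T - L + 1), g j • Xd (0 + (j : ℕ))) = Xs 0 := by
      funext r
      have h1 := congrFun hMg (Sum.inr r)
      simp only [Matrix.mulVec, dotProduct, hMD, Matrix.of_apply,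
        Sum.elim_inr] at h1
      simp only [Finset.sum_apply, Pi.smul_apply, smul_eq_mul, Nat.zero_add]
      rw [← h1]
      exact Finset.sum_congr rfl fun j _ => mul_comm _ _
    have hUc : ∀ k, k < L →
        (∑ j : Fin (T - L + 1), g j • Ud (k + (j : ℕ))) = Us k := by
      intro k hk
      funext i
      rw [← hank_apply ud Ud hUdeq g k hk i, hg1]
      simp only [hUsD, dif_pos hk]
    -- outputs agree
    have hYc : ∀ k, k < L →
        (∑ j : Fin (T - L + 1), g j • Yd (k + (j : ℕ))) = Ys k := by
      intro k hk
      have h1 := WillemsAux.output_formula A B C D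
        (fun k => ∑ j : Fin (T - L + 1), g j • Xd (k + (j : ℕ)))
        (fun k => ∑ j : Fin (T - L + 1), g j • Ud (k + (j : ℕ)))
        (fun k => ∑ j : Fin (T - L + 1), g j • Yd (k + (j : ℕ)))
        L (fun j hj => combX g j hj) (fun j hj => combY g j hj) k hk
      have h2 := WillemsAux.output_formula A B C D Xs Us Ys L hstepXs hstepYs k hk
      rw [h1, h2, hZ0, hUc k hk]
      congr 1
      congr 1
      refine Finset.sum_congr rfl fun s hs => ?_
      rw [hUc s (by have := Finset.mem_range.mp hs; omega)]
    refine ⟨g, hg1, ?_⟩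
    funext ki
    rw [show ki = (⟨(ki.1 : ℕ), ki.1.isLt⟩, ki.2) from rfl]
    rw [hank_apply yd Yd hYdeq g (ki.1 : ℕ) ki.1.isLt ki.2]
    have h4 := congrFun (hYc (ki.1 : ℕ) ki.1.isLt) ki.2
    rw [h4]
    simp only [hYsD, dif_pos ki.1.isLt, Fin.eta]
  · -- easy direction
    rintro ⟨g, hg1, hg2⟩
    refine ⟨fun k => ∑ j : Fin (T - L + 1), g j • Xd ((k : ℕ) + (j : ℕ)), fun k => ⟨?_, ?_⟩⟩
    · have h1 := combX g (k : ℕ) k.isLt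
      have h2 : (∑ j : Fin (T - L + 1), g j • Ud ((k : ℕ) + (j : ℕ))) = us k := by
        funext i
        rw [← hank_apply ud Ud hUdeq g (k : ℕ) k.isLt i, hg1]
      rw [h2] at h1
      exact h1
    · have h1 := combY g (k : ℕ) k.isLt
      have h2 : (∑ j : Fin (T - L + 1), g j • Ud ((k : ℕ) + (j : ℕ))) = us k := by
        funext i
        rw [← hank_apply ud Ud hUdeq g (k : ℕ) k.isLt i, hg1]
      have h3 : (∑ j : Fin (T - L + 1), g j • Yd ((k : ℕ) + (j : ℕ))) = ys k := by
        funext i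
        rw [← hank_apply yd Yd hYdeq g (k : ℕ) k.isLt i, hg2]
      rw [h2, h3] at h1
      exact h1
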